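/- For any N > d and M > d there is a constant C_{N,M} such that for all x, y ∈ ℝ^d: ⟨x − y⟩^{−M} ≤ C_{N,M} ∑_{β ∈ ℤ^d} ⟨x − β⟩^{−M} ⟨β − y⟩^{−N}. -/

import Mathlib

open scoped ENNReal

noncomputable def jap {E : Type*} [NormedAddCommGroup E] (x : E) : ℝ :=
  Real.sqrt (1 + ‖x‖ ^ 2)

lemma one_le_jap {E : Type*} [NormedAddCommGroup E] (x : E) : 1 ≤ jap x := by
  rw [jap]
  calc (1:ℝ) = Real.sqrt 1 := by simp
    _ ≤ _ := Real.sqrt_le_sqrt (by nlinarith [sq_nonneg ‖x‖])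

lemma jap_pos {E : Type*} [NormedAddCommGroup E] (x : E) : 0 < jap x :=
  lt_of_lt_of_le one_pos (one_le_jap x)

lemma jap_peetre {E : Type*} [NormedAddCommGroup E] (a b : E) :
    jap (a + b) ≤ Real.sqrt 2 * jap a * jap b := by
  have h1 : ‖a + b‖ ≤ ‖a‖ + ‖b‖ := norm_add_le a b
  have h2 : (1 + ‖a + b‖ ^ 2) ≤ 2 * ((1 + ‖a‖ ^ 2) * (1 + ‖b‖ ^ 2)) := by
    nlinarith [norm_nonneg a, norm_nonneg b, norm_nonneg (a + b), sq_nonneg (‖a‖ * ‖b‖ - 1)]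
  calc jap (a + b) ≤ Real.sqrt (2 * ((1 + ‖a‖ ^ 2) * (1 + ‖b‖ ^ 2))) :=
        Real.sqrt_le_sqrt h2
    _ = Real.sqrt 2 * jap a * jap b := by
        rw [Real.sqrt_mul (by norm_num), Real.sqrt_mul (by positivity)]
        ring_nf
        rfl

/-- For `N > d`, `M > d` there is `C` with
`⟨x−y⟩^{−M} ≤ C ∑_{β ∈ ℤ^d} ⟨x−β⟩^{−M} ⟨β−y⟩^{−N}` for all `x, y ∈ ℝ^d`. -/
theorem stmt13 (d : ℕ) (hd : 1 ≤ d) (N M : ℝ) (hN : (d : ℝ) < N) (hM : (d : ℝ) < M) :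
    ∃ C : ℝ, 0 < C ∧ ∀ x y : Fin d → ℝ,
      ENNReal.ofReal (jap (x - y) ^ (-M))
        ≤ ENNReal.ofReal C *
            ∑' β : Fin d → ℤ,
              ENNReal.ofReal
                (jap (x - fun i => (β i : ℝ)) ^ (-M) *
                  jap ((fun i => (β i : ℝ)) - y) ^ (-N)) := by
  have hM0 : (0:ℝ) < M := lt_of_le_of_lt (Nat.cast_nonneg d) hM
  have hN0 : (0:ℝ) < N := lt_of_le_of_lt (Nat.cast_nonneg d) hN
  refine ⟨(2:ℝ) ^ M * Real.sqrt 2 ^ N, by positivity, fun x y => ?_⟩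
  set β : Fin d → ℤ := fun i => ⌊y i⌋ with hβ
  set c : Fin d → ℝ := fun i => (β i : ℝ) with hc
  -- ‖y - c‖ ≤ 1
  have hyc : ‖y - c‖ ≤ 1 := by
    rw [pi_norm_le_iff_of_nonneg one_pos.le]
    intro i
    rw [Pi.sub_apply, Real.norm_eq_abs, abs_le]
    constructor
    · have := Int.floor_le (y i); simp only [hc, hβ]; linarith
    · have := Int.lt_floor_add_one (y i); simp only [hc, hβ]; linarith
  have hjyc : jap (y - c) ≤ Real.sqrt 2 := by
    rw [jap]
    apply Real.sqrt_le_sqrt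
    nlinarith [norm_nonneg (y - c)]
  have hjcy : jap (c - y) ≤ Real.sqrt 2 := by
    rw [show c - y = -(y - c) by abel, jap, norm_neg]; exact hjyc
  -- jap (x - c) ≤ 2 * jap (x - y)
  have hxc : jap (x - c) ≤ 2 * jap (x - y) := by
    have := jap_peetre (x - y) (y - c)
    rw [show x - y + (y - c) = x - c by abel] at this
    calc jap (x - c) ≤ Real.sqrt 2 * jap (x - y) * jap (y - c) := this
      _ ≤ Real.sqrt 2 * jap (x - y) * Real.sqrt 2 := by
          have := jap_pos (x - y)
          exact mul_le_mul_of_nonneg_left hjyc (by positivity)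
      _ = 2 * jap (x - y) := by
          rw [show Real.sqrt 2 * jap (x - y) * Real.sqrt 2
              = (Real.sqrt 2 * Real.sqrt 2) * jap (x - y) by ring,
            Real.mul_self_sqrt (by norm_num)]
  -- key real inequality
  have key : jap (x - y) ^ (-M)
      ≤ ((2:ℝ) ^ M * Real.sqrt 2 ^ N) * (jap (x - c) ^ (-M) * jap (c - y) ^ (-N)) := by
    have h1 : (2 * jap (x - y)) ^ (-M) ≤ jap (x - c) ^ (-M) :=
      Real.rpow_le_rpow_of_nonpos (jap_pos _) hxc (neg_nonpos.mpr hM0.le)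
    have h2 : Real.sqrt 2 ^ (-N) ≤ jap (c - y) ^ (-N) :=
      Real.rpow_le_rpow_of_nonpos (jap_pos _) hjcy (neg_nonpos.mpr hN0.le)
    have h1' : (2:ℝ) ^ (-M) * jap (x - y) ^ (-M) ≤ jap (x - c) ^ (-M) := by
      rwa [Real.mul_rpow (by norm_num) (jap_pos _).le] at h1
    have hA : (0:ℝ) < jap (x - y) ^ (-M) := Real.rpow_pos_of_pos (jap_pos _) _
    have h2' : (0:ℝ) < Real.sqrt 2 ^ (-N) := Real.rpow_pos_of_pos (by positivity) _
    have hprod : ((2:ℝ) ^ (-M) * jap (x - y) ^ (-M)) * Real.sqrt 2 ^ (-N)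
        ≤ jap (x - c) ^ (-M) * jap (c - y) ^ (-N) :=
      mul_le_mul h1' h2 h2'.le (Real.rpow_pos_of_pos (jap_pos _) _).le
    have hC : ((2:ℝ) ^ M * Real.sqrt 2 ^ N) * ((2:ℝ) ^ (-M) * Real.sqrt 2 ^ (-N)) = 1 := by
      rw [show (2:ℝ) ^ M * Real.sqrt 2 ^ N * ((2:ℝ) ^ (-M) * Real.sqrt 2 ^ (-N))
          = ((2:ℝ) ^ M * (2:ℝ) ^ (-M)) * (Real.sqrt 2 ^ N * Real.sqrt 2 ^ (-N)) by ring,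
        ← Real.rpow_add (by norm_num), ← Real.rpow_add (by positivity)]
      simp
    calc jap (x - y) ^ (-M)
        = ((2:ℝ) ^ M * Real.sqrt 2 ^ N) *
            (((2:ℝ) ^ (-M) * jap (x - y) ^ (-M)) * Real.sqrt 2 ^ (-N)) := by
          rw [show ((2:ℝ) ^ M * Real.sqrt 2 ^ N) *
              (((2:ℝ) ^ (-M) * jap (x - y) ^ (-M)) * Real.sqrt 2 ^ (-N))
              = (((2:ℝ) ^ M * Real.sqrt 2 ^ N) * ((2:ℝ) ^ (-M) * Real.sqrt 2 ^ (-N)))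
                * jap (x - y) ^ (-M) by ring, hC, one_mul]
      _ ≤ ((2:ℝ) ^ M * Real.sqrt 2 ^ N) * (jap (x - c) ^ (-M) * jap (c - y) ^ (-N)) :=
          mul_le_mul_of_nonneg_left hprod (by positivity)
  -- pass to ENNReal
  have hterm : ENNReal.ofReal (jap (x - c) ^ (-M) * jap (c - y) ^ (-N))
      ≤ ∑' b : Fin d → ℤ,
          ENNReal.ofReal
            (jap (x - fun i => (b i : ℝ)) ^ (-M) *
              jap ((fun i => (b i : ℝ)) - y) ^ (-N)) := by
    exact ENNReal.le_tsum β
  calc ENNReal.ofReal (jap (x - y) ^ (-M))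
      ≤ ENNReal.ofReal (((2:ℝ) ^ M * Real.sqrt 2 ^ N) *
          (jap (x - c) ^ (-M) * jap (c - y) ^ (-N))) := ENNReal.ofReal_le_ofReal key
    _ = ENNReal.ofReal ((2:ℝ) ^ M * Real.sqrt 2 ^ N) *
          ENNReal.ofReal (jap (x - c) ^ (-M) * jap (c - y) ^ (-N)) :=
        ENNReal.ofReal_mul (by positivity)
    _ ≤ _ := mul_le_mul_right hterm _
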